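/- (Dani correspondence) Let r = (r₁,…,r_n) with r₁+⋯+r_n = 1 and r_i ≥ 0, and for x ∈ ℝⁿ let u(x) = [[1,x],[0,I_n]] and a(t) = diag(e^t, e^{-r₁t},…,e^{-r_nt}). Then x ∈ Bad(r) — i.e., there exists c > 0 such that max_i q^{r_i}|qx_i − p_i| ≥ c for all q ∈ ℕ and p ∈ ℤⁿ — if and only if there exists ε > 0 such that for all t > 0 the lattice a(t)u(x)ℤ^{n+1} contains no non-zero vector of Euclidean norm less than ε. -/

import Mathlib

/-- The unipotent matrix u(x) = [[1, x],[0, Iₙ]] ∈ SL(n+1,ℝ): ones on the diagonal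
and the entries of the row vector x in positions (1,2),…,(1,n+1). -/
noncomputable def uMat (n : ℕ) (x : Fin n → ℝ) : Matrix (Fin (n + 1)) (Fin (n + 1)) ℝ :=
  fun i j =>
    if i = 0 then (if h : j = 0 then 1 else x (j.pred h))
    else if i = j then 1 else 0

/-- The diagonal matrix a(t) = diag(e^t, e^{-r₁t}, …, e^{-rₙt}). -/
noncomputable def aMat (n : ℕ) (t : ℝ) (r : Fin n → ℝ) :
    Matrix (Fin (n + 1)) (Fin (n + 1)) ℝ :=
  fun i j =>
    if i = j then (if h : i = 0 then Real.exp t else Real.exp (-(r (i.pred h) * t)))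
    else 0

/-- The Euclidean norm on ℝ^m. -/
noncomputable def eNorm {m : ℕ} (a : Fin m → ℝ) : ℝ :=
  Real.sqrt (∑ k, a k ^ 2)

namespace Stmt19

open Matrix MeasureTheory
open scoped ENNReal NNReal

lemma eNorm_nonneg {m : ℕ} (a : Fin m → ℝ) : 0 ≤ eNorm a := Real.sqrt_nonneg _

lemma abs_le_eNorm {m : ℕ} (a : Fin m → ℝ) (i : Fin m) : |a i| ≤ eNorm a := by
  rw [eNorm, ← Real.sqrt_sq_eq_abs]
  exact Real.sqrt_le_sqrt (Finset.single_le_sum (f := fun k => a k ^ 2)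
    (fun k _ => sq_nonneg _) (Finset.mem_univ i))

lemma eNorm_le {m : ℕ} (a : Fin m → ℝ) {c : ℝ} (hc : 0 ≤ c) (h : ∀ i, |a i| ≤ c) :
    eNorm a ≤ Real.sqrt m * c := by
  have h1 : ∑ k, a k ^ 2 ≤ (m : ℝ) * c ^ 2 := by
    calc ∑ k, a k ^ 2 ≤ ∑ _k : Fin m, c ^ 2 := by
          apply Finset.sum_le_sum
          intro i _
          rw [← sq_abs]
          exact pow_le_pow_left₀ (abs_nonneg _) (h i) 2
      _ = (m : ℝ) * c ^ 2 := by simp [mul_comm]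
  calc eNorm a ≤ Real.sqrt ((m : ℝ) * c ^ 2) := Real.sqrt_le_sqrt h1
    _ = Real.sqrt m * c := by
        rw [Real.sqrt_mul (Nat.cast_nonneg m), Real.sqrt_sq hc]

lemma exists_coord {m : ℕ} (hm : 2 ≤ m) (a : Fin m → ℝ) {ε : ℝ} (hε : 0 < ε)
    (h : ε ≤ eNorm a) : ∃ i, ε / m ≤ |a i| := by
  by_contra hcon
  push_neg at hcon
  have hmR : (2:ℝ) ≤ (m:ℝ) := by exact_mod_cast hm
  have h1 : eNorm a ≤ Real.sqrt m * (ε / m) :=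
    eNorm_le a (by positivity) fun i => (hcon i).le
  have hs : Real.sqrt m * (ε / m) < ε := by
    have h2 : Real.sqrt m < m := by
      nlinarith [Real.sq_sqrt (by linarith : (0:ℝ) ≤ (m:ℝ)),
        Real.sqrt_nonneg (m:ℝ), Real.sqrt_le_sqrt hmR]
    calc Real.sqrt m * (ε / m) < (m:ℝ) * (ε / m) := by
          apply mul_lt_mul_of_pos_right h2 (by positivity)
      _ = ε := by field_simp
  linarith

section coords

variable {n : ℕ} (t : ℝ) (r x : Fin n → ℝ)

/-- The matrix B(t) = a(t)⁻¹ u(x)⁻ᵀ. -/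
noncomputable def bMat (n : ℕ) (t : ℝ) (r : Fin n → ℝ) (x : Fin n → ℝ) :
    Matrix (Fin (n + 1)) (Fin (n + 1)) ℝ :=
  fun i j =>
    if h : i = 0 then (if j = 0 then Real.exp (-t) else 0)
    else if j = 0 then -(Real.exp (r (i.pred h) * t) * x (i.pred h))
    else if i = j then Real.exp (r (i.pred h) * t) else 0

lemma uMat_mulVec_zero (v : Fin (n+1) → ℝ) :
    (uMat n x).mulVec v 0 = v 0 + ∑ i, x i * v i.succ := by
  simp [Matrix.mulVec, dotProduct, uMat, Fin.sum_univ_succ, Fin.succ_ne_zero, Fin.pred_succ]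

lemma uMat_mulVec_succ (v : Fin (n+1) → ℝ) (i : Fin n) :
    (uMat n x).mulVec v i.succ = v i.succ := by
  simp [Matrix.mulVec, dotProduct, uMat, Fin.succ_ne_zero, ite_mul, Finset.sum_ite_eq]

lemma aMat_eq_diagonal : aMat n t r =
    Matrix.diagonal (fun i => if h : i = 0 then Real.exp t else Real.exp (-(r (i.pred h) * t))) :=
  rfl

lemma A_mulVec_zero (v : Fin (n+1) → ℝ) :
    (aMat n t r * uMat n x).mulVec v 0 = Real.exp t * (v 0 + ∑ i, x i * v i.succ) := by
  rw [← Matrix.mulVec_mulVec, aMat_eq_diagonal, Matrix.mulVec_diagonal, uMat_mulVec_zero]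
  simp

lemma A_mulVec_succ (v : Fin (n+1) → ℝ) (i : Fin n) :
    (aMat n t r * uMat n x).mulVec v i.succ = Real.exp (-(r i * t)) * v i.succ := by
  rw [← Matrix.mulVec_mulVec, aMat_eq_diagonal, Matrix.mulVec_diagonal, uMat_mulVec_succ]
  simp [Fin.succ_ne_zero, Fin.pred_succ]

lemma bMat_mulVec_zero (v : Fin (n+1) → ℝ) :
    (bMat n t r x).mulVec v 0 = Real.exp (-t) * v 0 := by
  simp [Matrix.mulVec, dotProduct, bMat, Fin.sum_univ_succ, Fin.succ_ne_zero]

lemma bMat_mulVec_succ (v : Fin (n+1) → ℝ) (i : Fin n) :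
    (bMat n t r x).mulVec v i.succ = Real.exp (r i * t) * (v i.succ - x i * v 0) := by
  have h0 : (i.succ : Fin (n+1)) ≠ 0 := Fin.succ_ne_zero i
  have hterm : ∀ j : Fin n, bMat n t r x i.succ j.succ * v j.succ
      = (if i = j then Real.exp (r i * t) else 0) * v j.succ := by
    intro j
    simp only [bMat, dif_neg h0, if_neg (Fin.succ_ne_zero j), Fin.pred_succ, Fin.succ_inj]
  rw [Matrix.mulVec, dotProduct, Fin.sum_univ_succ, Finset.sum_congr rfl fun j _ => hterm j]
  simp only [bMat, dif_neg h0, if_pos rfl, Fin.pred_succ, ite_mul, zero_mul,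
    Finset.sum_ite_eq, Finset.mem_univ, if_pos]
  ring

lemma dot_identity (k w : Fin (n+1) → ℝ) :
    (aMat n t r * uMat n x).mulVec k ⬝ᵥ (bMat n t r x).mulVec w = k ⬝ᵥ w := by
  have hs : ∑ i : Fin n, (aMat n t r * uMat n x).mulVec k i.succ * (bMat n t r x).mulVec w i.succ
      = ∑ i : Fin n, k i.succ * (w i.succ - x i * w 0) := by
    apply Finset.sum_congr rfl
    intro i _
    rw [A_mulVec_succ, bMat_mulVec_succ]
    have h1 : Real.exp (-(r i * t)) * Real.exp (r i * t) = 1 := by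
      rw [← Real.exp_add]; simp
    calc Real.exp (-(r i * t)) * k i.succ * (Real.exp (r i * t) * (w i.succ - x i * w 0))
        = (Real.exp (-(r i * t)) * Real.exp (r i * t)) * (k i.succ * (w i.succ - x i * w 0)) := by
          ring
      _ = k i.succ * (w i.succ - x i * w 0) := by rw [h1, one_mul]
  rw [dotProduct, dotProduct, Fin.sum_univ_succ, Fin.sum_univ_succ, hs,
    A_mulVec_zero, bMat_mulVec_zero]
  have h1 : Real.exp t * Real.exp (-t) = 1 := by
    rw [← Real.exp_add]; simp
  have h2 : ∑ i : Fin n, k i.succ * (w i.succ - x i * w 0)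
      = ∑ i : Fin n, k i.succ * w i.succ - (∑ i : Fin n, x i * k i.succ) * w 0 := by
    rw [Finset.sum_mul, ← Finset.sum_sub_distrib]
    apply Finset.sum_congr rfl
    intro i _
    ring
  have h3 : Real.exp t * (k 0 + ∑ i : Fin n, x i * k i.succ) * (Real.exp (-t) * w 0)
      = (k 0 + ∑ i : Fin n, x i * k i.succ) * w 0 := by
    have h4 : Real.exp t * (k 0 + ∑ i : Fin n, x i * k i.succ) * (Real.exp (-t) * w 0)
        = (Real.exp t * Real.exp (-t)) * ((k 0 + ∑ i : Fin n, x i * k i.succ) * w 0) := by ring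
    rw [h4, h1, one_mul]
  rw [h2, h3]
  ring

end coords

section dets

variable {n : ℕ} (t : ℝ) (r x : Fin n → ℝ)

lemma det_uMat : (uMat n x).det = 1 := by
  have hu : (uMat n x).BlockTriangular id := by
    intro i j hij
    have hij' : (j : Fin (n+1)) < i := hij
    have hi0 : i ≠ 0 := by
      intro h
      rw [h] at hij'
      exact absurd hij' (not_lt.mpr (Fin.zero_le j))
    have hij2 : i ≠ j := (ne_of_gt hij')
    simp [uMat, hi0, hij2]
  rw [Matrix.det_of_upperTriangular hu]
  apply Finset.prod_eq_one
  intro i _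
  by_cases h : i = 0
  · subst h; simp [uMat]
  · simp [uMat, h]

lemma det_aMat (hr1 : ∑ i, r i = 1) : (aMat n t r).det = 1 := by
  rw [aMat_eq_diagonal, Matrix.det_diagonal, Fin.prod_univ_succ]
  have hterm : ∀ i : Fin n,
      (if h : (i.succ : Fin (n+1)) = 0 then Real.exp t
        else Real.exp (-(r ((i.succ : Fin (n+1)).pred h) * t))) = Real.exp (-(r i * t)) := by
    intro i
    rw [dif_neg (Fin.succ_ne_zero i)]
    simp [Fin.pred_succ]
  rw [Finset.prod_congr rfl fun i _ => hterm i, ← Real.exp_sum]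
  rw [dif_pos rfl, ← Real.exp_add]
  have hsum : (∑ i : Fin n, -(r i * t)) = -t := by
    rw [Finset.sum_neg_distrib, ← Finset.sum_mul, hr1, one_mul]
  rw [hsum]
  simp

lemma det_A (hr1 : ∑ i, r i = 1) : (aMat n t r * uMat n x).det = 1 := by
  rw [Matrix.det_mul, det_aMat t r hr1, det_uMat x, one_mul]

lemma det_bMat (hr1 : ∑ i, r i = 1) : (bMat n t r x).det = 1 := by
  have hl : (bMat n t r x).BlockTriangular OrderDual.toDual := by
    intro i j hij
    have hij' : (i : Fin (n+1)) < j := hij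
    have hj0 : j ≠ 0 := by
      intro h
      rw [h] at hij'
      exact absurd hij' (not_lt.mpr (Fin.zero_le i))
    have hij2 : i ≠ j := (ne_of_lt hij')
    by_cases h : i = 0
    · subst h; simp [bMat, hj0]
    · simp [bMat, h, hj0, hij2]
  rw [Matrix.det_of_lowerTriangular _ hl, Fin.prod_univ_succ]
  have hterm : ∀ i : Fin n, bMat n t r x i.succ i.succ = Real.exp (r i * t) := by
    intro i
    simp [bMat, dif_neg (Fin.succ_ne_zero i), Fin.succ_ne_zero, Fin.pred_succ]
  rw [Finset.prod_congr rfl fun i _ => hterm i, ← Real.exp_sum]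
  have h00 : bMat n t r x 0 0 = Real.exp (-t) := by simp [bMat]
  rw [h00, ← Real.exp_add]
  have hsum : (∑ i : Fin n, r i * t) = t := by
    rw [← Finset.sum_mul, hr1, one_mul]
  rw [hsum]
  simp

end dets

section gon

open Submodule

set_option maxHeartbeats 1000000 in
lemma gon {n : ℕ} (hn : 1 ≤ n) (A B : Matrix (Fin (n+1)) (Fin (n+1)) ℝ)
    (hdetA : A.det = 1)
    (hdot : ∀ k w : Fin (n+1) → ℝ, A.mulVec k ⬝ᵥ B.mulVec w = k ⬝ᵥ w)
    (w : Fin (n+1) → ℤ) (hw : w ≠ 0) {δ : ℝ}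
    (hδ : eNorm (B.mulVec fun i => (w i : ℝ)) ≤ δ) :
    ∃ k : Fin (n+1) → ℤ, k ≠ 0 ∧
      eNorm (A.mulVec fun i => (k i : ℝ)) ≤ ((n:ℝ)+1)^2 * (3*δ) ^ ((n:ℝ)⁻¹) := by
  classical
  have hnR : (1:ℝ) ≤ (n:ℝ) := by exact_mod_cast hn
  set wR : Fin (n+1) → ℝ := B.mulVec fun i => (w i : ℝ) with hwRdef
  obtain ⟨i0, hi0⟩ : ∃ i, w i ≠ 0 := by
    by_contra h; push_neg at h; exact hw (funext h)
  have hwR : wR ≠ 0 := by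
    intro h
    have h2 := hdot (fun i => (w i : ℝ)) (fun i => (w i : ℝ))
    rw [← hwRdef, h, dotProduct_zero] at h2
    have h3 : (0:ℝ) < (fun i => (w i : ℝ)) ⬝ᵥ (fun i => (w i : ℝ)) := by
      rw [dotProduct]
      apply Finset.sum_pos' (fun i _ => mul_self_nonneg _)
      refine ⟨i0, Finset.mem_univ _, ?_⟩
      have : ((w i0 : ℝ)) ≠ 0 := Int.cast_ne_zero.mpr hi0
      exact mul_self_pos.mpr this
    rw [← h2] at h3
    exact lt_irrefl _ h3
  obtain ⟨j, -, hj⟩ := Finset.exists_max_image Finset.univ (fun i => |wR i|)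
    ⟨0, Finset.mem_univ 0⟩
  have hjmax : ∀ i, |wR i| ≤ |wR j| := fun i => hj i (Finset.mem_univ i)
  have hwRj : 0 < |wR j| := by
    obtain ⟨i1, hi1⟩ : ∃ i, wR i ≠ 0 := Function.ne_iff.mp hwR
    exact lt_of_lt_of_le (abs_pos.mpr hi1) (hjmax i1)
  have hjδ : |wR j| ≤ δ := le_trans (abs_le_eNorm wR j) hδ
  have hδ0 : 0 < δ := lt_of_lt_of_le hwRj hjδ
  have hnne : ((n:ℝ)) ≠ 0 := by linarith
  set R : ℝ := (3*δ) ^ ((n:ℝ)⁻¹) with hRdef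
  have hR0 : 0 < R := Real.rpow_pos_of_pos (by linarith) _
  have hRn : R ^ n = 3*δ := by
    rw [hRdef, ← Real.rpow_natCast ((3*δ) ^ ((n:ℝ)⁻¹)) n, ← Real.rpow_mul (by linarith),
      inv_mul_cancel₀ hnne, Real.rpow_one]
  -- the matrix T
  set T : Matrix (Fin (n+1)) (Fin (n+1)) ℝ := (1 : Matrix _ _ ℝ).updateRow j wR with hTdef
  have hdetT : T.det = wR j := by
    have h1 : wR = ∑ l, wR l • (1 : Matrix (Fin (n+1)) (Fin (n+1)) ℝ) l := by
      ext i
      simp [Matrix.one_apply, Finset.sum_apply, mul_ite, Finset.sum_ite_eq']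
    rw [hTdef]
    conv_lhs => rw [h1]
    rw [Matrix.det_updateRow_sum, Matrix.det_one, smul_eq_mul, mul_one]
  have hdetT0 : T.det ≠ 0 := by rw [hdetT]; exact abs_pos.mp hwRj
  have hTrow_j : ∀ y : Fin (n+1) → ℝ, T.mulVec y j = wR ⬝ᵥ y := by
    intro y; rw [hTdef, Matrix.mulVec, Matrix.updateRow_self]
  have hTrow_ne : ∀ (y : Fin (n+1) → ℝ) (l), l ≠ j → T.mulVec y l = y l := by
    intro y l hl
    rw [hTdef, Matrix.mulVec, Matrix.updateRow_ne hl]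
    simp [dotProduct, Matrix.one_apply, ite_mul, Finset.sum_ite_eq]
  -- the box and the convex body S
  set c : Fin (n+1) → ℝ := fun i => if i = j then 1/2 else R with hcdef
  have hc0 : ∀ i, 0 ≤ c i := by
    intro i; rw [hcdef]; dsimp only; split
    · norm_num
    · exact hR0.le
  set Box : Set (Fin (n+1) → ℝ) := Set.univ.pi fun i => Set.Icc (-(c i)) (c i) with hBoxdef
  have hBoxmeas : MeasurableSet Box := MeasurableSet.univ_pi fun i => measurableSet_Icc
  have hBoxconv : Convex ℝ Box := convex_pi fun i _ => convex_Icc _ _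
  set S : Set (Fin (n+1) → ℝ) := Matrix.toLin' T ⁻¹' Box with hSdef
  have hSconv : Convex ℝ S := hBoxconv.linear_preimage _
  have hSsymm : ∀ y ∈ S, -y ∈ S := by
    intro y hy
    simp only [hSdef, Set.mem_preimage, map_neg, hBoxdef, Set.mem_pi, Set.mem_univ,
      forall_true_left, Set.mem_Icc, Pi.neg_apply] at hy ⊢
    intro i
    obtain ⟨h1, h2⟩ := hy i
    constructor <;> linarith
  -- volume computations
  have hvolS : volume S = ENNReal.ofReal |T.det⁻¹| * volume Box := by
    rw [hSdef, ← MeasureTheory.Measure.map_apply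
      (Continuous.measurable (LinearMap.continuous_on_pi _)) hBoxmeas,
      Real.map_matrix_volume_pi_eq_smul_volume_pi hdetT0]
    simp [ENNReal.smul_def]
  have hvolBox : volume Box = ENNReal.ofReal (2*R) ^ n := by
    rw [hBoxdef, volume_pi_pi]
    have h1 : ∀ i : Fin (n+1), volume (Set.Icc (-(c i)) (c i)) = ENNReal.ofReal (2 * c i) := by
      intro i; rw [Real.volume_Icc]; congr 1; ring
    rw [Finset.prod_congr rfl fun i _ => h1 i,
      ← Finset.mul_prod_erase Finset.univ _ (Finset.mem_univ j)]
    have h2 : c j = 1/2 := by rw [hcdef]; simp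
    have h3 : ∀ i ∈ Finset.univ.erase j, ENNReal.ofReal (2 * c i) = ENNReal.ofReal (2*R) := by
      intro i hi
      rw [hcdef]; simp [(Finset.mem_erase.mp hi).1]
    rw [Finset.prod_congr rfl h3, Finset.prod_const, h2,
      Finset.card_erase_of_mem (Finset.mem_univ j), Finset.card_univ, Fintype.card_fin]
    norm_num
  -- the lattice
  have hAunit : IsUnit A.det := by rw [hdetA]; exact isUnit_one
  have hAinv : Invertible A := A.invertibleOfIsUnitDet hAunit
  set bas : Module.Basis (Fin (n+1)) ℝ (Fin (n+1) → ℝ) :=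
    (Pi.basisFun ℝ (Fin (n+1))).map (A.toLinearEquiv' hAinv) with hbasdef
  have hbas_apply : ∀ i, bas i = A.mulVec (Pi.single i 1) := by
    intro i
    rw [hbasdef, Module.Basis.map_apply]
    show Matrix.toLin' A ((Pi.basisFun ℝ (Fin (n+1))) i) = _
    rw [Matrix.toLin'_apply]
    congr 1
    ext l
    simp [Pi.basisFun_apply]
  have hcnt : Countable ↥((span ℤ (Set.range ⇑bas)).toAddSubgroup) :=
    (inferInstance : Countable ↥(span ℤ (Set.range ⇑bas)))
  have hfund := ZSpan.isAddFundamentalDomain' bas volume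
  have hvolF : volume (ZSpan.fundamentalDomain bas) = 1 := by
    rw [ZSpan.volume_fundamentalDomain]
    have hofbas : (Matrix.of ⇑bas) = Aᵀ := by
      ext i l
      rw [Matrix.of_apply, hbas_apply i, Matrix.transpose_apply, Matrix.mulVec_single]
      simp
    rw [hofbas, Matrix.det_transpose, hdetA]
    simp
  have hlt : volume (ZSpan.fundamentalDomain bas) * 2 ^ Module.finrank ℝ (Fin (n+1) → ℝ)
      < volume S := by
    rw [hvolF, one_mul, Module.finrank_pi, Fintype.card_fin, hvolS, hvolBox, hdetT]
    rw [← ENNReal.ofReal_pow (by positivity), ← ENNReal.ofReal_mul (abs_nonneg _)]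
    have hkey : (2:ℝ)^(n+1) < |(wR j)⁻¹| * (2*R)^n := by
      have h1 : (2*R)^n = 2^n * (3*δ) := by rw [mul_pow, hRn]
      have h2 : δ⁻¹ ≤ |wR j|⁻¹ := by
        apply inv_anti₀ hwRj hjδ
      rw [abs_inv]
      calc (2:ℝ)^(n+1) = 2 * 2^n := by ring
        _ < 3 * 2^n := by
            have : (0:ℝ) < 2^n := by positivity
            nlinarith
        _ = δ⁻¹ * (2^n * (3*δ)) := by field_simp
        _ ≤ |wR j|⁻¹ * (2^n * (3*δ)) := by
            apply mul_le_mul_of_nonneg_right h2 (by positivity)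
        _ = |wR j|⁻¹ * (2*R)^n := by rw [h1]
    calc (2:ℝ≥0∞)^(n+1) = ENNReal.ofReal ((2:ℝ)^(n+1)) := by
          rw [ENNReal.ofReal_pow (by norm_num)]
          norm_num
      _ < ENNReal.ofReal (|(wR j)⁻¹| * (2*R)^n) := by
          have hpos : (0:ℝ) < |(wR j)⁻¹| * (2*R)^n :=
            mul_pos (abs_pos.mpr (inv_ne_zero (abs_pos.mp hwRj))) (by positivity)
          rw [ENNReal.ofReal_lt_ofReal_iff hpos]
          exact hkey
  obtain ⟨v, hv0, hvS⟩ :=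
    MeasureTheory.exists_ne_zero_mem_lattice_of_measure_mul_two_pow_lt_measure
      hfund hSsymm hSconv hlt
  -- extract the integer vector
  have hvmem : (v : Fin (n+1) → ℝ) ∈ span ℤ (Set.range ⇑bas) := v.2
  obtain ⟨kk, hkk⟩ := (mem_span_range_iff_exists_fun ℤ).mp hvmem
  have hvE : (v : Fin (n+1) → ℝ) = A.mulVec (fun i => (kk i : ℝ)) := by
    funext l
    rw [← hkk, Finset.sum_apply]
    have h1 : ∀ i : Fin (n+1), (kk i • bas i) l = A l i * (kk i : ℝ) := by
      intro i
      rw [Pi.smul_apply, hbas_apply i, Matrix.mulVec_single]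
      simp [zsmul_eq_mul]
      ring
    rw [Finset.sum_congr rfl fun i _ => h1 i]
    rw [Matrix.mulVec, dotProduct]
  have hkne : kk ≠ 0 := by
    intro h
    apply hv0
    have hz : (v : Fin (n+1) → ℝ) = 0 := by
      rw [hvE]
      have h2 : (fun i => ((kk i : ℝ))) = (0 : Fin (n+1) → ℝ) := by
        funext i; rw [h]; simp
      rw [h2, Matrix.mulVec_zero]
    exact ZeroMemClass.coe_eq_zero.mp hz
  -- bounds
  have hvBox : Matrix.toLin' T (v : Fin (n+1) → ℝ) ∈ Box := hvS
  rw [Matrix.toLin'_apply] at hvBox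
  have hmemIcc : ∀ i, T.mulVec (v : Fin (n+1) → ℝ) i ∈ Set.Icc (-(c i)) (c i) :=
    fun i => hvBox i (Set.mem_univ i)
  have hdotj : |wR ⬝ᵥ (v : Fin (n+1) → ℝ)| ≤ 1/2 := by
    have h := hmemIcc j
    rw [hTrow_j] at h
    have hcj : c j = 1/2 := by rw [hcdef]; simp
    rw [hcj] at h
    rw [abs_le]
    exact Set.mem_Icc.mp h
  have hint : wR ⬝ᵥ (v : Fin (n+1) → ℝ) = ((∑ i, kk i * w i : ℤ) : ℝ) := by
    rw [dotProduct_comm, hvE, hdot]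
    rw [dotProduct]
    push_cast
    rfl
  have hzero : wR ⬝ᵥ (v : Fin (n+1) → ℝ) = 0 := by
    rw [hint]
    have hz : |(∑ i, kk i * w i : ℤ)| < 1 := by
      have hz1 : |((∑ i, kk i * w i : ℤ) : ℝ)| ≤ 1/2 := by rw [← hint]; exact hdotj
      have hz2 : |((∑ i, kk i * w i : ℤ) : ℝ)| < 1 := lt_of_le_of_lt hz1 (by norm_num)
      exact_mod_cast hz2
    rw [Int.abs_lt_one_iff.mp hz]
    simp
  have hcoord : ∀ l, l ≠ j → |(v : Fin (n+1) → ℝ) l| ≤ R := by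
    intro l hl
    have h := hmemIcc l
    rw [hTrow_ne _ l hl] at h
    have hcl : c l = R := by rw [hcdef]; simp [hl]
    rw [hcl] at h
    rw [abs_le]
    exact Set.mem_Icc.mp h
  have hcoordj : |(v : Fin (n+1) → ℝ) j| ≤ (n:ℝ) * R := by
    have hzero' : ∑ l, wR l * (v : Fin (n+1) → ℝ) l = 0 := hzero
    rw [← Finset.add_sum_erase Finset.univ (fun l => wR l * (v : Fin (n+1) → ℝ) l)
      (Finset.mem_univ j)] at hzero'
    have h1 : |wR j * (v : Fin (n+1) → ℝ) j| ≤ (n:ℝ) * (|wR j| * R) := by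
      have h2 : wR j * (v : Fin (n+1) → ℝ) j
          = -∑ l ∈ Finset.univ.erase j, wR l * (v : Fin (n+1) → ℝ) l := by linarith
      rw [h2, abs_neg]
      calc |∑ l ∈ Finset.univ.erase j, wR l * (v : Fin (n+1) → ℝ) l|
          ≤ ∑ l ∈ Finset.univ.erase j, |wR l * (v : Fin (n+1) → ℝ) l| :=
            Finset.abs_sum_le_sum_abs _ _
        _ ≤ ∑ l ∈ Finset.univ.erase j, |wR j| * R := by
            apply Finset.sum_le_sum
            intro l hl
            rw [abs_mul]
            exact mul_le_mul (hjmax l) (hcoord l (Finset.mem_erase.mp hl).1)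
              (abs_nonneg _) (abs_nonneg _)
        _ = (n:ℝ) * (|wR j| * R) := by
            rw [Finset.sum_const, Finset.card_erase_of_mem (Finset.mem_univ j),
              Finset.card_univ, Fintype.card_fin]
            simp [nsmul_eq_mul]
    rw [abs_mul] at h1
    have h3 : |wR j| * |(v : Fin (n+1) → ℝ) j| ≤ |wR j| * ((n:ℝ) * R) := by nlinarith
    exact le_of_mul_le_mul_left h3 hwRj
  refine ⟨kk, hkne, ?_⟩
  rw [← hvE]
  have hall : ∀ i, |(v : Fin (n+1) → ℝ) i| ≤ (n:ℝ) * R := by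
    intro i
    by_cases h : i = j
    · rw [h]; exact hcoordj
    · exact le_trans (hcoord i h) (by nlinarith)
  have hbound := eNorm_le (v : Fin (n+1) → ℝ) (by positivity) hall
  push_cast at hbound
  have hsq : Real.sqrt ((n:ℝ)+1) ≤ (n:ℝ)+1 := by
    nlinarith [Real.sq_sqrt (by linarith : (0:ℝ) ≤ (n:ℝ)+1), Real.sqrt_nonneg ((n:ℝ)+1)]
  calc eNorm (v : Fin (n+1) → ℝ) ≤ Real.sqrt ((n:ℝ)+1) * ((n:ℝ) * R) := hbound
    _ ≤ ((n:ℝ)+1) * ((n:ℝ) * R) := mul_le_mul_of_nonneg_right hsq (by positivity)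
    _ ≤ ((n:ℝ)+1) * (((n:ℝ)+1) * R) := by nlinarith [hR0.le]
    _ = ((n:ℝ)+1)^2 * (3*δ) ^ ((n:ℝ)⁻¹) := by rw [hRdef]; ring

end gon

section transfer

lemma transfer {n : ℕ} (hn : 1 ≤ n) (A B : Matrix (Fin (n+1)) (Fin (n+1)) ℝ)
    (hdetA : A.det = 1)
    (hdot : ∀ k w : Fin (n+1) → ℝ, A.mulVec k ⬝ᵥ B.mulVec w = k ⬝ᵥ w)
    {ε : ℝ} (hε : 0 < ε)
    (h : ∀ k : Fin (n+1) → ℤ, k ≠ 0 → ε ≤ eNorm (A.mulVec fun i => (k i : ℝ))) :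
    ∀ w : Fin (n+1) → ℤ, w ≠ 0 →
      (ε / (2*((n:ℝ)+1)^2))^n / 3 ≤ eNorm (B.mulVec fun i => (w i : ℝ)) := by
  intro w hw
  by_contra hcon
  push_neg at hcon
  obtain ⟨k, hk0, hkb⟩ := gon hn A B hdetA hdot w hw (le_refl _)
  have hεk := h k hk0
  have hn0 : (0:ℝ) < (n:ℝ) := by exact_mod_cast hn
  set y : ℝ := ε / (2*((n:ℝ)+1)^2) with hydef
  have hy0 : 0 < y := by positivity
  have hδ0 : 0 ≤ eNorm (B.mulVec fun i => (w i : ℝ)) := eNorm_nonneg _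
  have h3 : 3 * eNorm (B.mulVec fun i => (w i : ℝ)) < y ^ n := by
    rw [hydef]; linarith
  have h4 : (3 * eNorm (B.mulVec fun i => (w i : ℝ))) ^ ((n:ℝ)⁻¹) < y := by
    have h5 : (3 * eNorm (B.mulVec fun i => (w i : ℝ))) ^ ((n:ℝ)⁻¹)
        < (y^n) ^ ((n:ℝ)⁻¹) :=
      Real.rpow_lt_rpow (by linarith) h3 (by positivity)
    rw [← Real.rpow_natCast y n, ← Real.rpow_mul hy0.le,
      mul_inv_cancel₀ hn0.ne', Real.rpow_one] at h5
    exact h5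
  have h6 : ((n:ℝ)+1)^2 * (3 * eNorm (B.mulVec fun i => (w i : ℝ))) ^ ((n:ℝ)⁻¹)
      < ((n:ℝ)+1)^2 * y := mul_lt_mul_of_pos_left h4 (by positivity)
  have h7 : ((n:ℝ)+1)^2 * y = ε / 2 := by
    rw [hydef]; field_simp
  linarith

end transfer

section dani

variable {n : ℕ} (t : ℝ) (r x : Fin n → ℝ)

/-- Step 1 of the Dani correspondence: badly approximable implies the "dual" orbit
is bounded away from 0. -/
lemma step1 (hr0 : ∀ i, 0 ≤ r i) {c : ℝ} (hc : 0 < c)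
    (hbad : ∀ q : ℕ, 0 < q → ∀ p : Fin n → ℤ,
      ∃ i, c ≤ (q : ℝ) ^ (r i) * |(q : ℝ) * x i - (p i : ℝ)|)
    (ht : 0 < t) (v : Fin (n+1) → ℤ) (hv : v ≠ 0) :
    min c 1 ≤ eNorm ((bMat n t r x).mulVec fun i => (v i : ℝ)) := by
  have hc₀ : 0 < min c 1 := lt_min hc one_pos
  by_cases hm : v 0 = 0
  · -- some later coordinate is a non-zero integer
    obtain ⟨l, hl⟩ : ∃ l, v l ≠ 0 := Function.ne_iff.mp hv
    have hl0 : l ≠ 0 := by rintro rfl; exact hl hm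
    set i := l.pred hl0 with hidef
    have hsucc : i.succ = l := Fin.succ_pred l hl0
    have hcoord : (bMat n t r x).mulVec (fun i => (v i : ℝ)) i.succ
        = Real.exp (r i * t) * ((v i.succ : ℝ) - x i * (v 0 : ℝ)) :=
      bMat_mulVec_succ t r x _ i
    have h1 : (1:ℝ) ≤ |(bMat n t r x).mulVec (fun i => (v i : ℝ)) i.succ| := by
      rw [hcoord, hm]
      have h2 : (1:ℝ) ≤ |(v i.succ : ℝ)| := by
        rw [hsucc]
        have := Int.one_le_abs hl
        calc (1:ℝ) = ((1:ℤ):ℝ) := by norm_num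
          _ ≤ ((|v l| : ℤ) : ℝ) := by exact_mod_cast this
          _ = |(v l : ℝ)| := by push_cast; ring
      have h3 : (1:ℝ) ≤ Real.exp (r i * t) :=
        Real.one_le_exp (mul_nonneg (hr0 i) ht.le)
      rw [Int.cast_zero, mul_zero, sub_zero, abs_mul,
        abs_of_pos (Real.exp_pos _)]
      nlinarith
    calc min c 1 ≤ 1 := min_le_right c 1
      _ ≤ |(bMat n t r x).mulVec (fun i => (v i : ℝ)) i.succ| := h1
      _ ≤ eNorm ((bMat n t r x).mulVec fun i => (v i : ℝ)) := abs_le_eNorm _ _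
  · set q : ℕ := (v 0).natAbs with hqdef
    have hq : 0 < q := Int.natAbs_pos.mpr hm
    set p : Fin n → ℤ := fun i => (v 0).sign * v i.succ with hpdef
    obtain ⟨i, hi⟩ := hbad q hq p
    have hqcast : ((q:ℕ):ℝ) = |((v 0 : ℤ) : ℝ)| := by
      rw [hqdef, Nat.cast_natAbs, Int.cast_abs]
    have hpq : |(q:ℝ) * x i - (p i : ℝ)| = |(v 0 : ℝ) * x i - (v i.succ : ℝ)| := by
      rcases lt_or_gt_of_ne hm with hneg | hpos
      · have hs : (v 0).sign = -1 := Int.sign_eq_neg_one_of_neg hneg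
        have habs : |((v 0 : ℤ) : ℝ)| = -((v 0 : ℤ) : ℝ) := by
          apply abs_of_neg; exact_mod_cast hneg
        rw [hqcast, habs, hpdef]
        simp only [hs]
        rw [show (-(v 0 : ℝ)) * x i - (((-1 : ℤ) * v i.succ : ℤ) : ℝ)
          = -((v 0 : ℝ) * x i - (v i.succ : ℝ)) by push_cast; ring, abs_neg]
      · have hs : (v 0).sign = 1 := Int.sign_eq_one_of_pos hpos
        have habs : |((v 0 : ℤ) : ℝ)| = ((v 0 : ℤ) : ℝ) := by
          apply abs_of_pos; exact_mod_cast hpos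
        rw [hqcast, habs, hpdef]
        simp only [hs, one_mul]
    by_cases hcase : min c 1 ≤ Real.exp (-t) * |(v 0 : ℝ)|
    · have h0 : (bMat n t r x).mulVec (fun i => (v i : ℝ)) 0
          = Real.exp (-t) * (v 0 : ℝ) := bMat_mulVec_zero t r x _
      calc min c 1 ≤ Real.exp (-t) * |(v 0 : ℝ)| := hcase
        _ = |(bMat n t r x).mulVec (fun i => (v i : ℝ)) 0| := by
            rw [h0, abs_mul, abs_of_pos (Real.exp_pos _)]
        _ ≤ eNorm ((bMat n t r x).mulVec fun i => (v i : ℝ)) := abs_le_eNorm _ _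
    · push_neg at hcase
      have hlt1 : Real.exp (-t) * |(v 0 : ℝ)| < 1 :=
        lt_of_lt_of_le hcase (min_le_right c 1)
      have hee : Real.exp t * Real.exp (-t) = 1 := by
        rw [← Real.exp_add]; simp
      have habs : |(v 0 : ℝ)| < Real.exp t := by
        have hrw : |(v 0 : ℝ)| = Real.exp t * (Real.exp (-t) * |(v 0 : ℝ)|) := by
          rw [← mul_assoc, hee, one_mul]
        rw [hrw]
        calc Real.exp t * (Real.exp (-t) * |(v 0 : ℝ)|) < Real.exp t * 1 :=
              mul_lt_mul_of_pos_left hlt1 (Real.exp_pos t)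
          _ = Real.exp t := mul_one _
      have hrp : |(v 0 : ℝ)| ^ (r i) ≤ Real.exp (r i * t) := by
        calc |(v 0 : ℝ)| ^ (r i) ≤ (Real.exp t) ^ (r i) :=
              Real.rpow_le_rpow (abs_nonneg _) habs.le (hr0 i)
          _ = Real.exp (r i * t) := by
              rw [Real.rpow_def_of_pos (Real.exp_pos t), Real.log_exp, mul_comm]
      have hcoord : (bMat n t r x).mulVec (fun i => (v i : ℝ)) i.succ
          = Real.exp (r i * t) * ((v i.succ : ℝ) - x i * (v 0 : ℝ)) :=
        bMat_mulVec_succ t r x _ i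
      have hchain : min c 1 ≤ |(bMat n t r x).mulVec (fun i => (v i : ℝ)) i.succ| := by
        rw [hcoord, abs_mul, abs_of_pos (Real.exp_pos _)]
        have h5 : |(v i.succ : ℝ) - x i * (v 0 : ℝ)| = |(v 0 : ℝ) * x i - (v i.succ : ℝ)| := by
          rw [abs_sub_comm]
          congr 1
          ring
        rw [h5]
        calc min c 1 ≤ c := min_le_left c 1
          _ ≤ (q : ℝ) ^ (r i) * |(q:ℝ) * x i - (p i : ℝ)| := hi
          _ = |(v 0 : ℝ)| ^ (r i) * |(v 0 : ℝ) * x i - (v i.succ : ℝ)| := by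
              rw [hpq, hqcast]
          _ ≤ Real.exp (r i * t) * |(v 0 : ℝ) * x i - (v i.succ : ℝ)| :=
              mul_le_mul_of_nonneg_right hrp (abs_nonneg _)
      exact le_trans hchain (abs_le_eNorm _ _)

/-- Step 2 of the Dani correspondence: a bounded "dual" orbit implies badly approximable. -/
lemma step2 (hn : 1 ≤ n) (hr1 : ∑ i, r i = 1) (hr0 : ∀ i, 0 ≤ r i) {ε : ℝ}
    (hε : 0 < ε) (hε1 : ε ≤ 1)
    (hdual : ∀ t : ℝ, 0 < t → ∀ v : Fin (n+1) → ℤ, v ≠ 0 →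
      ε ≤ eNorm ((bMat n t r x).mulVec fun i => (v i : ℝ))) :
    ∀ q : ℕ, 0 < q → ∀ p : Fin n → ℤ,
      ∃ i, ε * ε / (2*((n:ℝ)+1)^2) ≤ (q : ℝ) ^ (r i) * |(q:ℝ) * x i - (p i : ℝ)| := by
  intro q hq p
  have hq1 : (1:ℝ) ≤ (q:ℝ) := by exact_mod_cast hq
  have hnR : (1:ℝ) ≤ (n:ℝ) := by exact_mod_cast hn
  set K : ℝ := 2*((n:ℝ)+1)/ε with hKdef
  have hK0 : 0 < K := by positivity
  have hK1 : 1 ≤ K := by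
    rw [hKdef, le_div_iff₀ hε]
    nlinarith
  have hKq0 : (0:ℝ) < K * q := by positivity
  have hKq1 : (1:ℝ) < K * q := by
    have hK2 : (2:ℝ) ≤ K := by
      rw [hKdef, le_div_iff₀ hε]
      nlinarith
    nlinarith
  set t : ℝ := Real.log (K * q) with htdef
  have ht : 0 < t := Real.log_pos hKq1
  set v : Fin (n+1) → ℤ := Fin.cons (q:ℤ) p with hvdef
  have hv : v ≠ 0 := by
    intro h
    have h0 := congrFun h 0
    rw [hvdef, Fin.cons_zero] at h0
    simp only [Pi.zero_apply] at h0
    have : q = 0 := by exact_mod_cast h0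
    omega
  have hnorm := hdual t ht v hv
  obtain ⟨l, hl⟩ := exists_coord (by omega : 2 ≤ n + 1) _ hε hnorm
  have hden : ((n + 1 : ℕ) : ℝ) = (n:ℝ) + 1 := by push_cast; ring
  rw [hden] at hl
  have hexp : Real.exp (-t) = (K * (q:ℝ))⁻¹ := by
    rw [htdef, Real.exp_neg, Real.exp_log hKq0]
  induction l using Fin.cases with
  | zero =>
    exfalso
    have hcoord : (bMat n t r x).mulVec (fun i => (v i : ℝ)) 0
        = Real.exp (-t) * (v 0 : ℝ) := bMat_mulVec_zero t r x _
    rw [hcoord] at hl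
    have hv0 : ((v 0 : ℤ) : ℝ) = (q:ℝ) := by rw [hvdef]; simp [Fin.cons_zero]
    rw [hv0, hexp] at hl
    have heq : (K * (q:ℝ))⁻¹ * (q:ℝ) = K⁻¹ := by
      field_simp
    rw [abs_of_pos (by rw [heq]; positivity : (0:ℝ) < (K * (q:ℝ))⁻¹ * (q:ℝ)), heq] at hl
    have hKinv : K⁻¹ = ε / (2*((n:ℝ)+1)) := by
      rw [hKdef]; field_simp
    rw [hKinv] at hl
    have : ε / ((n:ℝ)+1) > ε / (2*((n:ℝ)+1)) := by
      apply div_lt_div_of_pos_left hε (by linarith) (by linarith)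
    linarith
  | succ i =>
    refine ⟨i, ?_⟩
    have hcoord : (bMat n t r x).mulVec (fun i => (v i : ℝ)) i.succ
        = Real.exp (r i * t) * ((v i.succ : ℝ) - x i * (v 0 : ℝ)) :=
      bMat_mulVec_succ t r x _ i
    have hv0 : ((v 0 : ℤ) : ℝ) = (q:ℝ) := by rw [hvdef]; simp [Fin.cons_zero]
    have hvs : ((v i.succ : ℤ) : ℝ) = ((p i : ℤ) : ℝ) := by rw [hvdef]; simp [Fin.cons_succ]
    have hexp2 : Real.exp (r i * t) = (K * (q:ℝ)) ^ (r i) := by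
      rw [Real.rpow_def_of_pos hKq0, ← htdef, mul_comm]
    rw [hcoord, hv0, hvs, abs_mul, abs_of_pos (Real.exp_pos _), hexp2] at hl
    have h5 : |(p i : ℝ) - x i * (q:ℝ)| = |(q:ℝ) * x i - (p i : ℝ)| := by
      rw [abs_sub_comm]
      congr 1
      ring
    rw [h5, Real.mul_rpow hK0.le (by positivity)] at hl
    -- hl : ε / (n+1) ≤ K ^ r i * ((q:ℝ) ^ r i * |q x i - p i|)
    have hri1 : r i ≤ 1 := by
      rw [← hr1]
      exact Finset.single_le_sum (fun j _ => hr0 j) (Finset.mem_univ i)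
    have hKr : K ^ (r i) ≤ K := by
      calc K ^ (r i) ≤ K ^ (1:ℝ) := Real.rpow_le_rpow_of_exponent_le hK1 hri1
        _ = K := Real.rpow_one K
    have hX0 : 0 ≤ (q:ℝ) ^ (r i) * |(q:ℝ) * x i - (p i : ℝ)| := by positivity
    have h6 : ε / ((n:ℝ)+1) ≤ K * ((q:ℝ) ^ (r i) * |(q:ℝ) * x i - (p i : ℝ)|) := by
      calc ε / ((n:ℝ)+1) ≤ K ^ (r i) * ((q:ℝ) ^ (r i) * |(q:ℝ) * x i - (p i : ℝ)|) := by
            rw [← mul_assoc]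
            exact hl
        _ ≤ K * ((q:ℝ) ^ (r i) * |(q:ℝ) * x i - (p i : ℝ)|) :=
            mul_le_mul_of_nonneg_right hKr hX0
    have h7 : ε * ε / (2*((n:ℝ)+1)^2) = (ε / ((n:ℝ)+1)) / K := by
      rw [hKdef]
      field_simp
    rw [h7, div_le_iff₀ hK0, mul_comm]
    exact h6

end dani

end Stmt19

/-- Dani correspondence: x ∈ Bad(r) iff the orbit {a(t)u(x)ℤ^{n+1} : t > 0} stays
in some K_ε, i.e. iff there is ε > 0 such that for all t > 0 every non-zero vector
of the lattice a(t)u(x)ℤ^{n+1} has Euclidean norm at least ε. -/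
theorem stmt19 (n : ℕ) (hn : 1 ≤ n) (r : Fin n → ℝ)
    (hr1 : ∑ i, r i = 1) (hr0 : ∀ i, 0 ≤ r i) (x : Fin n → ℝ) :
    (∃ c : ℝ, 0 < c ∧ ∀ q : ℕ, 0 < q → ∀ p : Fin n → ℤ,
        ∃ i, c ≤ (q : ℝ) ^ (r i) * |(q : ℝ) * x i - (p i : ℝ)|) ↔
    (∃ ε : ℝ, 0 < ε ∧ ∀ t : ℝ, 0 < t → ∀ v : Fin (n + 1) → ℤ, v ≠ 0 →
        ε ≤ eNorm ((aMat n t r * uMat n x).mulVec fun k => (v k : ℝ))) := by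

  constructor
  · rintro ⟨c, hc, hbad⟩
    have hc₀ : 0 < min c 1 := lt_min hc one_pos
    refine ⟨(min c 1 / (2*((n:ℝ)+1)^2))^n / 3, by positivity, ?_⟩
    intro t ht v hv
    have hdual : ∀ k : Fin (n+1) → ℤ, k ≠ 0 →
        min c 1 ≤ eNorm ((Stmt19.bMat n t r x).mulVec fun i => (k i : ℝ)) :=
      fun k hk => Stmt19.step1 t r x hr0 hc hbad ht k hk
    have hdot' : ∀ k w : Fin (n+1) → ℝ,
        dotProduct ((Stmt19.bMat n t r x).mulVec k)
          ((aMat n t r * uMat n x).mulVec w) = dotProduct k w := by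
      intro k w
      rw [dotProduct_comm, Stmt19.dot_identity, dotProduct_comm]
    exact Stmt19.transfer hn (Stmt19.bMat n t r x) (aMat n t r * uMat n x)
      (Stmt19.det_bMat t r x hr1) hdot' hc₀ hdual v hv
  · rintro ⟨ε, hε, horb⟩
    have hε₁ : (0:ℝ) < (ε / (2*((n:ℝ)+1)^2))^n / 3 := by positivity
    set ε₂ : ℝ := min ((ε / (2*((n:ℝ)+1)^2))^n / 3) 1 with hε₂def
    have hε₂ : 0 < ε₂ := lt_min hε₁ one_pos
    have hε₂1 : ε₂ ≤ 1 := min_le_right _ _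
    have hdual : ∀ t : ℝ, 0 < t → ∀ v : Fin (n+1) → ℤ, v ≠ 0 →
        ε₂ ≤ eNorm ((Stmt19.bMat n t r x).mulVec fun i => (v i : ℝ)) := by
      intro t ht v hv
      refine le_trans (min_le_left _ _) ?_
      exact Stmt19.transfer hn (aMat n t r * uMat n x) (Stmt19.bMat n t r x)
        (Stmt19.det_A t r x hr1) (Stmt19.dot_identity t r x) hε
        (fun k hk => horb t ht k hk) v hv
    exact ⟨ε₂ * ε₂ / (2*((n:ℝ)+1)^2), by positivity,
      Stmt19.step2 r x hn hr1 hr0 hε₂ hε₂1 hdual⟩
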